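/- Let l be a prime, s, n₀ positive integers, and let P = (ℤ/l^sℤ)^{n₀} ⋊ P_l(S_{n₀}) where P_l(S_{n₀}) is a Sylow l-subgroup of S_{n₀} acting by permuting coordinates. Then the center Z(P) is isomorphic to (ℤ/l^sℤ)^{r}, where r = Σ_{k=0}^{μ_l(n₀)} (⌊n₀/l^k⌋ − l⌊n₀/l^{k+1}⌋) and μ_l(n₀) is the largest integer d with l^d ≤ n₀. -/

import Mathlib

/-- The action of `Equiv.Perm ι` on `ι → M` by permuting coordinates,
as a homomorphism into the automorphism group. -/
def permHom (ι M : Type) [Group M] : Equiv.Perm ι →* MulAut (ι → M) where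
  toFun σ := MulEquiv.arrowCongr σ (MulEquiv.refl M)
  map_one' := by ext f i; rfl
  map_mul' σ τ := by ext f i; rfl

open scoped Nat



lemma geom_aux (l : ℕ) (hl : 1 < l) : ∀ e : ℕ, (l - 1) * ∑ j ∈ Finset.range e, l ^ j + 1 = l ^ e
  | 0 => by simp
  | (e + 1) => by
    have ih := geom_aux l hl e
    have h2 : (l - 1) * l ^ e = l ^ e * l - l ^ e := by
      rw [Nat.sub_mul, one_mul, mul_comm]
    have h3 : l ^ e ≤ l ^ e * l := Nat.le_mul_of_pos_right _ (by omega)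
    rw [Finset.sum_range_succ, Nat.mul_add, pow_succ]
    omega

lemma padic_pow (l : ℕ) (hl : l.Prime) (e : ℕ) :
    (l - 1) * padicValNat l ((l ^ e)!) + 1 = l ^ e := by
  haveI : Fact l.Prime := ⟨hl⟩
  rw [padicValNat_factorial (b := e + 1) (by rw [Nat.log_pow hl.one_lt]; exact Nat.lt_succ_self e)]
  have h : ∑ i ∈ Finset.Ico 1 (e + 1), l ^ e / l ^ i = ∑ j ∈ Finset.range e, l ^ j := by
    rw [Finset.sum_Ico_eq_sum_range]
    simp only [Nat.add_sub_cancel]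
    rw [← Finset.sum_range_reflect]
    refine Finset.sum_congr rfl fun j hj => ?_
    rw [Nat.pow_div (by simp at hj; omega) hl.pos]
    congr 1
    simp at hj; omega
  rw [h]
  exact geom_aux l hl.one_lt e

lemma sum_formula (l n : ℕ) (hl : l.Prime) :
    ∑ k ∈ Finset.range (Nat.log l n + 1), (n / l ^ k - l * (n / l ^ (k + 1)))
      + (l - 1) * padicValNat l (n !) = n := by
  haveI : Fact l.Prime := ⟨hl⟩
  set t := Nat.log l n with ht
  have hT : padicValNat l (n !) = ∑ k ∈ Finset.range t, n / l ^ (k + 1) := by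
    rw [padicValNat_factorial (b := t + 2) (by omega)]
    rw [Finset.sum_Ico_eq_sum_range]
    norm_num
    rw [Finset.sum_range_succ]
    have h0 : n / l ^ (1 + t) = 0 :=
      Nat.div_eq_of_lt (by rw [add_comm]; exact Nat.lt_pow_succ_log_self hl.one_lt n)
    rw [h0, add_zero]
    exact Finset.sum_congr rfl fun k _ => by rw [add_comm 1 k]
  have hle : ∀ k, l * (n / l ^ (k + 1)) ≤ n / l ^ k := by
    intro k
    have : n / l ^ (k + 1) = n / l ^ k / l := by
      rw [Nat.div_div_eq_div_mul, ← pow_succ]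
    rw [this, mul_comm]
    exact Nat.div_mul_le_self _ _
  rw [hT]
  set C := ∑ k ∈ Finset.range t, n / l ^ (k + 1) with hC
  have hA : ∑ k ∈ Finset.range (t + 1), n / l ^ k = C + n := by
    rw [Finset.sum_range_succ']
    simp
    exact hC.symm
  have hB : ∑ k ∈ Finset.range (t + 1), n / l ^ (k + 1) = C := by
    rw [Finset.sum_range_succ]
    have h0 : n / l ^ (t + 1) = 0 := Nat.div_eq_of_lt (Nat.lt_pow_succ_log_self hl.one_lt n)
    rw [h0, add_zero]
  have hsub : ∑ k ∈ Finset.range (t + 1), (n / l ^ k - l * (n / l ^ (k + 1)))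
      = (C + n) - l * C := by
    rw [Finset.sum_tsub_distrib _ (fun k _ => hle k), hA, ← hB, Finset.mul_sum]
  have h6 : l * C ≤ C + n := by
    rw [← hA, ← hB, Finset.mul_sum]
    exact Finset.sum_le_sum fun k _ => hle k
  have h4 : (l - 1) * C = l * C - C := by rw [Nat.sub_mul, one_mul]
  have h5 : C ≤ l * C := Nat.le_mul_of_pos_left _ hl.pos
  omega

lemma orbit_count (l n₀ : ℕ) (hl : l.Prime) (P' : Sylow l (Equiv.Perm (Fin n₀))) :
    (l - 1) * padicValNat l (n₀ !)
      + Nat.card (MulAction.orbitRel.Quotient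
          ↥(P' : Subgroup (Equiv.Perm (Fin n₀))) (Fin n₀)) = n₀ := by
  classical
  haveI : Fact l.Prime := ⟨hl⟩
  set G := ↥(P' : Subgroup (Equiv.Perm (Fin n₀))) with hG
  set Ω := MulAction.orbitRel.Quotient G (Fin n₀) with hΩ
  haveI : Fintype Ω := Fintype.ofFinite _
  letI : ∀ ω : Ω, Fintype ↥ω.orbit := fun _ => Fintype.ofFinite _
  set v := padicValNat l (n₀ !) with hv
  have hcardG : Nat.card G = l ^ v := by
    have := Sylow.card_eq_multiplicity P'
    rw [Nat.card_eq_fintype_card (α := Equiv.Perm (Fin n₀)), Fintype.card_perm,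
      Fintype.card_fin, Nat.factorization_def _ hl] at this
    exact this
  have horb : ∀ ω : Ω, ∃ e : ℕ, Nat.card ↥ω.orbit = l ^ e := by
    intro ω
    have h1 : Nat.card ↥ω.orbit ∣ Nat.card G := by
      rw [MulAction.orbitRel.Quotient.orbit_eq_orbit_out ω Quotient.out_eq']
      rw [Nat.card_congr (MulAction.orbitEquivQuotientStabilizer G (Quotient.out ω))]
      exact Subgroup.card_quotient_dvd_card _
    rw [hcardG] at h1
    obtain ⟨e, -, he⟩ := (Nat.dvd_prime_pow hl).mp h1
    exact ⟨e, he⟩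
  have hsum : ∑ ω : Ω, Nat.card ↥ω.orbit = n₀ := by
    have h := Nat.card_congr (MulAction.selfEquivSigmaOrbits' G (Fin n₀))
    rw [Nat.card_eq_fintype_card, Fintype.card_fin] at h
    rw [Nat.card_eq_fintype_card, Fintype.card_sigma] at h
    calc ∑ ω : Ω, Nat.card ↥ω.orbit = ∑ ω : Ω, Fintype.card ↥ω.orbit :=
          Finset.sum_congr rfl fun ω _ => Nat.card_eq_fintype_card
      _ = n₀ := h.symm
  have Φinj : Function.Injective
      (Pi.monoidHom (fun ω : Ω => MulAction.toPermHom G ↥ω.orbit) : G →* _) := by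
    rw [injective_iff_map_eq_one]
    intro g hg
    have hx : ∀ x : Fin n₀, g • x = x := by
      intro x
      set ω₀ : Ω := Quotient.mk'' x with hω₀
      have hmem : x ∈ MulAction.orbitRel.Quotient.orbit ω₀ :=
        MulAction.orbitRel.Quotient.mem_orbit.mpr rfl
      have h1 : MulAction.toPermHom G ↥(MulAction.orbitRel.Quotient.orbit ω₀) g = 1 :=
        congrFun hg _
      have h2 := congrArg (fun p : Equiv.Perm ↥(MulAction.orbitRel.Quotient.orbit ω₀) =>
        ((p ⟨x, hmem⟩ : ↥(MulAction.orbitRel.Quotient.orbit ω₀)) : Fin n₀)) h1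
      simpa using h2
    refine Subtype.ext (Equiv.ext fun x => ?_)
    exact hx x
  have hdvd2 : l ^ v ∣ ∏ ω : Ω, (Nat.card ↥ω.orbit)! := by
    rw [← hcardG]
    refine dvd_trans (Subgroup.card_dvd_of_injective _ Φinj) ?_
    rw [Nat.card_pi]
    exact dvd_of_eq (Finset.prod_congr rfl fun ω _ => by
      rw [Nat.card_eq_fintype_card, Fintype.card_perm, Nat.card_eq_fintype_card])
  have hfacne : ∀ ω : Ω, (Nat.card ↥ω.orbit)! ≠ 0 := fun ω => (Nat.factorial_pos _).ne'
  have hprodne : (∏ ω : Ω, (Nat.card ↥ω.orbit)!) ≠ 0 :=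
    Finset.prod_ne_zero_iff.mpr fun ω _ => hfacne ω
  have hfact : (∏ ω : Ω, (Nat.card ↥ω.orbit)!).factorization l
      = ∑ ω : Ω, padicValNat l ((Nat.card ↥ω.orbit)!) := by
    rw [Nat.factorization_prod (fun ω _ => hfacne ω)]
    rw [Finset.sum_apply']
    exact Finset.sum_congr rfl fun ω _ => Nat.factorization_def _ hl
  have hv1 : v ≤ ∑ ω : Ω, padicValNat l ((Nat.card ↥ω.orbit)!) := by
    have := (Nat.Prime.pow_dvd_iff_le_factorization hl hprodne).mp hdvd2
    rwa [hfact] at this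
  have hv2 : ∑ ω : Ω, padicValNat l ((Nat.card ↥ω.orbit)!) ≤ v := by
    have hd : (∏ ω : Ω, (Nat.card ↥ω.orbit)!) ∣ n₀ ! := by
      have := Nat.prod_factorial_dvd_factorial_sum Finset.univ
        (fun ω : Ω => Nat.card ↥ω.orbit)
      rwa [hsum] at this
    have hn₀ : (n₀ !) ≠ 0 := (Nat.factorial_pos _).ne'
    have h := (Nat.factorization_le_iff_dvd hprodne hn₀).mpr hd
    have h2 := h l
    rwa [hfact, Nat.factorization_def _ hl] at h2
  have hveq : v = ∑ ω : Ω, padicValNat l ((Nat.card ↥ω.orbit)!) := le_antisymm hv1 hv2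
  calc (l - 1) * v + Nat.card Ω
      = ∑ ω : Ω, ((l - 1) * padicValNat l ((Nat.card ↥ω.orbit)!) + 1) := by
        rw [Finset.sum_add_distrib, ← Finset.mul_sum, ← hveq, Finset.sum_const,
          smul_eq_mul, mul_one, Finset.card_univ, Nat.card_eq_fintype_card]
    _ = ∑ ω : Ω, Nat.card ↥ω.orbit := Finset.sum_congr rfl fun ω _ => by
        obtain ⟨e, he⟩ := horb ω
        rw [he]
        exact padic_pow l hl e
    _ = n₀ := hsum

lemma center_semidirect (M : Type) [CommGroup M] (x₀ : M) (hx₀ : x₀ ≠ 1) (n : ℕ)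
    (H : Subgroup (Equiv.Perm (Fin n))) :
    Nonempty ((Subgroup.center ((Fin n → M) ⋊[(permHom (Fin n) M).comp H.subtype] H))
      ≃* (MulAction.orbitRel.Quotient ↥H (Fin n) → M)) := by
  classical
  set G := ↥H with hGdef
  set Fp := (permHom (Fin n) M).comp H.subtype with hFpdef
  set Ω := MulAction.orbitRel.Quotient G (Fin n) with hΩdef
  have hFp : ∀ (r : G) (a : Fin n → M) (i : Fin n),
      Fp r a i = a ((r : Equiv.Perm (Fin n)).symm i) := fun _ _ _ => rfl
  have hmk : ∀ (r : G) (i : Fin n),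
      (Quotient.mk'' ((r : Equiv.Perm (Fin n)).symm i) : Ω) = Quotient.mk'' i := by
    intro r i
    refine Quotient.sound' ?_
    rw [MulAction.orbitRel_apply]
    exact ⟨r⁻¹, rfl⟩
  let ψ : (Ω → M) →* (Fin n → M) :=
    { toFun := fun b i => b (Quotient.mk'' i)
      map_one' := rfl
      map_mul' := fun b c => rfl }
  have hinv : ∀ (b : Ω → M) (r : G), Fp r (ψ b) = ψ b := by
    intro b r
    funext i
    rw [hFp]
    show b (Quotient.mk'' ((r : Equiv.Perm (Fin n)).symm i)) = b (Quotient.mk'' i)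
    rw [hmk]
  have hcen : ∀ a : Fin n → M, (∀ r : G, Fp r a = a) →
      (⟨a, 1⟩ : (Fin n → M) ⋊[Fp] G) ∈ Subgroup.center _ := by
    intro a ha
    rw [Subgroup.mem_center_iff]
    intro g
    refine SemidirectProduct.ext ?_ ?_
    · show g.left * Fp g.right a = a * Fp 1 g.left
      rw [ha, map_one, MulAut.one_apply, mul_comm]
    · show g.right * 1 = 1 * g.right
      rw [mul_one, one_mul]
  let Θ : (Ω → M) →* ↥(Subgroup.center ((Fin n → M) ⋊[Fp] G)) :=
    { toFun := fun b => ⟨⟨ψ b, 1⟩, hcen (ψ b) (hinv b)⟩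
      map_one' := by
        refine Subtype.ext (SemidirectProduct.ext ?_ rfl)
        show ψ 1 = 1
        exact map_one ψ
      map_mul' := fun b c => by
        refine Subtype.ext (SemidirectProduct.ext ?_ ?_)
        · show ψ (b * c) = ψ b * Fp 1 (ψ c)
          rw [map_one, MulAut.one_apply, map_mul]
        · show (1 : G) = 1 * 1
          rw [mul_one] }
  have hinj : Function.Injective Θ := by
    intro b c h
    have h2 : ψ b = ψ c := congrArg (fun z => z.val.left) h
    funext ω
    induction ω using Quotient.inductionOn' with
    | h i => exact congrFun h2 i
  have hsurj : Function.Surjective Θ := by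
    rintro ⟨⟨a, g⟩, hz⟩
    rw [Subgroup.mem_center_iff] at hz
    have hg : ∀ j : Fin n, (g : Equiv.Perm (Fin n)).symm j = j := by
      intro j
      have h1 := congrArg SemidirectProduct.left (hz ⟨Pi.mulSingle j x₀, 1⟩)
      rw [SemidirectProduct.mul_left, SemidirectProduct.mul_left] at h1
      have h1' : Pi.mulSingle j x₀ * a = a * Fp g (Pi.mulSingle j x₀) := by
        have : Fp (1 : G) a = a := by rw [map_one, MulAut.one_apply]
        simpa [this] using h1
      have h2 : Fp g (Pi.mulSingle j x₀) = Pi.mulSingle j x₀ := by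
        have := h1'.symm.trans (mul_comm (Pi.mulSingle j x₀) a)
        exact mul_left_cancel this
      have h3 := congrFun h2 j
      rw [hFp] at h3
      by_contra hne
      rw [Pi.mulSingle_eq_of_ne hne, Pi.mulSingle_eq_same] at h3
      exact hx₀ h3.symm
    have hg1 : g = 1 := by
      refine Subtype.ext (Equiv.ext fun j => ?_)
      have h5 := hg ((g : Equiv.Perm (Fin n)) j)
      rw [Equiv.symm_apply_apply] at h5
      simpa using h5.symm
    have hainv : ∀ r : G, Fp r a = a := by
      intro r
      have h1 := congrArg SemidirectProduct.left (hz ⟨1, r⟩)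
      rw [SemidirectProduct.mul_left, SemidirectProduct.mul_left] at h1
      have h1' : 1 * Fp r a = a * Fp g 1 := h1
      rw [map_one, one_mul, mul_one] at h1'
      exact h1'
    refine ⟨fun ω => a (Quotient.out ω), ?_⟩
    refine Subtype.ext (SemidirectProduct.ext ?_ hg1.symm)
    funext i
    show a (Quotient.out (Quotient.mk'' i : Ω)) = a i
    have hout : (Quotient.mk'' (Quotient.out (Quotient.mk'' i : Ω)) : Ω)
        = Quotient.mk'' i := by
      rw [Quotient.out_eq']
    have hrel := Quotient.exact' hout
    rw [MulAction.orbitRel_apply] at hrel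
    obtain ⟨r, hr⟩ := hrel
    rw [← hr]
    exact congrFun (hainv r⁻¹) i
  exact ⟨(MulEquiv.ofBijective Θ ⟨hinj, hsurj⟩).symm⟩

/-- The center of `P = (ℤ/l^sℤ)^{n₀} ⋊ P_l(S_{n₀})`, where a Sylow `l`-subgroup of
`S_{n₀}` acts by permuting coordinates, is isomorphic to `(ℤ/l^sℤ)^r` with
`r = Σ_{k=0}^{μ_l(n₀)} (⌊n₀/l^k⌋ − l⌊n₀/l^{k+1}⌋)`, `μ_l(n₀)` being the largest `d`
with `l^d ≤ n₀`. -/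
theorem center_of_wreath_sylow (l s n₀ : ℕ) (hl : l.Prime) (hs : 0 < s) (hn : 0 < n₀)
    (P' : Sylow l (Equiv.Perm (Fin n₀))) :
    Nonempty
      ((Subgroup.center ((Fin n₀ → Multiplicative (ZMod (l ^ s)))
          ⋊[(permHom (Fin n₀) (Multiplicative (ZMod (l ^ s)))).comp
              (P' : Subgroup (Equiv.Perm (Fin n₀))).subtype] P'))
        ≃* (Fin (∑ k ∈ Finset.range (Nat.log l n₀ + 1), (n₀ / l ^ k - l * (n₀ / l ^ (k + 1))))
            → Multiplicative (ZMod (l ^ s)))) := by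
  classical
  haveI : Fact l.Prime := ⟨hl⟩
  haveI : Fact (1 < l ^ s) := ⟨Nat.one_lt_pow (by omega) hl.one_lt⟩
  have hx₀ : (Multiplicative.ofAdd (1 : ZMod (l ^ s))) ≠ 1 := by
    intro h
    have h2 : (1 : ZMod (l ^ s)) = 0 := by
      have := congrArg Multiplicative.toAdd h
      simpa using this
    exact one_ne_zero h2
  obtain ⟨e⟩ := center_semidirect (Multiplicative (ZMod (l ^ s))) _ hx₀ n₀
      (P' : Subgroup (Equiv.Perm (Fin n₀)))
  have hcard : Nat.card (MulAction.orbitRel.Quotient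
      ↥(P' : Subgroup (Equiv.Perm (Fin n₀))) (Fin n₀))
      = ∑ k ∈ Finset.range (Nat.log l n₀ + 1), (n₀ / l ^ k - l * (n₀ / l ^ (k + 1))) := by
    have h1 := orbit_count l n₀ hl P'
    have h2 := sum_formula l n₀ hl
    omega
  exact ⟨e.trans (MulEquiv.arrowCongr (Finite.equivFinOfCardEq hcard) (MulEquiv.refl _))⟩
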